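/- (The radial-basis covariance matrix is a valid covariance matrix.) Let n ∈ ℕ, let x_1, …, x_n be points in the Euclidean plane ℝ², and let β ≥ 0 and λ > 0 be real numbers. Then the n × n real matrix Σ with entries Σ_{ij} = β · exp(−‖x_i − x_j‖² / (2λ²)) is symmetric and positive semidefinite. -/

import Mathlib

open Finset in
/-- Powers of a Gram-type kernel give a nonnegative quadratic form. -/
lemma rbf_aux_pow (n k : ℕ) (w : Fin n → ℝ) (u : Fin n → Fin 2 → ℝ) :
    0 ≤ ∑ i, ∑ j, w i * w j * (∑ a, u i a * u j a) ^ k := by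
  have h1 : ∀ i j : Fin n, (∑ a, u i a * u j a) ^ k
      = ∑ p ∈ Fintype.piFinset (fun _ : Fin k => (univ : Finset (Fin 2))),
          (∏ t, u i (p t)) * (∏ t, u j (p t)) := by
    intro i j
    rw [Finset.sum_pow']
    exact Finset.sum_congr rfl fun p _ => by rw [Finset.prod_mul_distrib]
  calc (0:ℝ) ≤ ∑ p ∈ Fintype.piFinset (fun _ : Fin k => (univ : Finset (Fin 2))),
        (∑ i, w i * ∏ t, u i (p t)) ^ 2 :=
      Finset.sum_nonneg fun p _ => sq_nonneg _
    _ = ∑ i, ∑ j, w i * w j * (∑ a, u i a * u j a) ^ k := by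
      simp_rw [h1, Finset.mul_sum, sq, Finset.sum_mul_sum]
      rw [Finset.sum_comm]
      refine Finset.sum_congr rfl fun i _ => ?_
      rw [Finset.sum_comm]
      refine Finset.sum_congr rfl fun j _ => Finset.sum_congr rfl fun p _ => by ring

/-- The exponential of a real Gram kernel gives a nonnegative quadratic form. -/
lemma rbf_aux_exp (n : ℕ) (w : Fin n → ℝ) (u : Fin n → Fin 2 → ℝ) :
    0 ≤ ∑ i, ∑ j, w i * w j * Real.exp (∑ a, u i a * u j a) := by
  have hexp : ∀ t : ℝ, Real.exp t = ∑' k : ℕ, t ^ k / (Nat.factorial k : ℝ) := by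
    intro t
    rw [Real.exp_eq_exp_ℝ, NormedSpace.exp_eq_tsum_div]
  have hsumm : ∀ i j : Fin n, Summable
      (fun k : ℕ => w i * w j * ((∑ a, u i a * u j a) ^ k / (Nat.factorial k : ℝ))) :=
    fun i j => Summable.mul_left (w i * w j) (Real.summable_pow_div_factorial (∑ a, u i a * u j a))
  calc (0:ℝ) ≤ ∑' k : ℕ, ∑ i, ∑ j, w i * w j * ((∑ a, u i a * u j a) ^ k / (Nat.factorial k : ℝ)) := by
        refine tsum_nonneg fun k => ?_
        have := rbf_aux_pow n k w u
        have h2 : ∀ i j : Fin n, w i * w j * ((∑ a, u i a * u j a) ^ k / (Nat.factorial k : ℝ))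
            = (w i * w j * (∑ a, u i a * u j a) ^ k) / (Nat.factorial k : ℝ) := fun i j => by ring
        simp_rw [h2, ← Finset.sum_div]
        exact div_nonneg this (Nat.cast_nonneg _)
    _ = ∑ i, ∑ j, w i * w j * Real.exp (∑ a, u i a * u j a) := by
        rw [Summable.tsum_finsetSum fun i _ => summable_sum fun j _ => hsumm i j]
        refine Finset.sum_congr rfl fun i _ => ?_
        rw [Summable.tsum_finsetSum fun j _ => hsumm i j]
        refine Finset.sum_congr rfl fun j _ => ?_
        rw [hexp, ← tsum_mul_left]

/-- The radial-basis (Gaussian) kernel covariance matrix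
`Σ i j = β · exp(−‖x i − x j‖² / (2 λ²))` built from points `x₁, …, xₙ` in the
Euclidean plane, with amplitude `β ≥ 0` and length scale `λ > 0`, is symmetric
and positive semidefinite — hence a valid covariance matrix for a multivariate
Gaussian distribution. -/
theorem rbf_kernel_matrix_posSemidef (n : ℕ)
    (x : Fin n → EuclideanSpace ℝ (Fin 2)) (β lam : ℝ)
    (hβ : 0 ≤ β) (hlam : 0 < lam) :
    (Matrix.of fun i j : Fin n =>
      β * Real.exp (-‖x i - x j‖ ^ 2 / (2 * lam ^ 2))).IsSymm ∧
    (Matrix.of fun i j : Fin n =>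
      β * Real.exp (-‖x i - x j‖ ^ 2 / (2 * lam ^ 2))).PosSemidef := by
  have hsymm : (Matrix.of fun i j : Fin n =>
      β * Real.exp (-‖x i - x j‖ ^ 2 / (2 * lam ^ 2))).IsSymm := by
    ext i j
    simp [Matrix.transpose_apply, norm_sub_rev (x j) (x i)]
  refine ⟨hsymm, Matrix.PosSemidef.of_dotProduct_mulVec_nonneg ?_ ?_⟩
  · -- IsHermitian
    ext i j
    simpa using congrFun (congrFun hsymm i) j
  · intro v
    -- rewrite the quadratic form
    have key : ∀ i j : Fin n, β * Real.exp (-‖x i - x j‖ ^ 2 / (2 * lam ^ 2))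
        = (Real.sqrt β * Real.exp (-‖x i‖ ^ 2 / (2 * lam ^ 2)))
          * (Real.sqrt β * Real.exp (-‖x j‖ ^ 2 / (2 * lam ^ 2)))
          * Real.exp (∑ a, (lam⁻¹ * x i a) * (lam⁻¹ * x j a)) := by
      intro i j
      have hnorm : ‖x i - x j‖ ^ 2 = ‖x i‖ ^ 2 - 2 * inner ℝ (x i) (x j) + ‖x j‖ ^ 2 :=
        norm_sub_sq_real (x i) (x j)
      have hinner : (inner ℝ (x i) (x j) : ℝ) = ∑ a, x i a * x j a := by
        rw [PiLp.inner_apply]; simp [RCLike.inner_apply, mul_comm]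
      have hl : lam ^ 2 ≠ 0 := pow_ne_zero _ hlam.ne'
      have hb : Real.sqrt β * Real.sqrt β = β := Real.mul_self_sqrt hβ
      have hsum : ∑ a, (lam⁻¹ * x i a) * (lam⁻¹ * x j a)
          = (inner ℝ (x i) (x j) : ℝ) / lam ^ 2 := by
        rw [hinner, Finset.sum_div]
        refine Finset.sum_congr rfl fun a _ => ?_
        rw [sq]
        field_simp
      have hE : Real.exp (-‖x i - x j‖ ^ 2 / (2 * lam ^ 2))
          = Real.exp (-‖x i‖ ^ 2 / (2 * lam ^ 2)) * Real.exp (-‖x j‖ ^ 2 / (2 * lam ^ 2))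
            * Real.exp ((inner ℝ (x i) (x j) : ℝ) / lam ^ 2) := by
        rw [← Real.exp_add, ← Real.exp_add]
        congr 1
        rw [hnorm]
        field_simp
        ring
      rw [hsum, hE]
      conv_lhs => rw [← hb]
      ring
    calc (0:ℝ) ≤ ∑ i, ∑ j,
          (v i * (Real.sqrt β * Real.exp (-‖x i‖ ^ 2 / (2 * lam ^ 2))))
          * (v j * (Real.sqrt β * Real.exp (-‖x j‖ ^ 2 / (2 * lam ^ 2))))
          * Real.exp (∑ a, (lam⁻¹ * x i a) * (lam⁻¹ * x j a)) :=
        rbf_aux_exp n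
          (fun i => v i * (Real.sqrt β * Real.exp (-‖x i‖ ^ 2 / (2 * lam ^ 2))))
          (fun i a => lam⁻¹ * x i a)
      _ = dotProduct (star v) (Matrix.mulVec (Matrix.of fun i j : Fin n =>
            β * Real.exp (-‖x i - x j‖ ^ 2 / (2 * lam ^ 2))) v) := by
          simp only [dotProduct, Matrix.mulVec, Matrix.of_apply, Pi.star_apply,
            star_trivial, Finset.mul_sum]
          refine Finset.sum_congr rfl fun i _ => Finset.sum_congr rfl fun j _ => ?_
          rw [key i j]
          ring
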